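/- arXiv:1710.02230 — 3 statements merged into one kernel-verified Lean document; each statement's English description precedes it below -/
import Mathlib

section
/- Under the assumptions of (i) Ext^i_A(T, X) = 0 for all i > n and all X ∈ A, and (ii) Ext^i_A(T, T^{(I)}) = 0 for all i > 0 and all sets I, in an abelian category A with exact coproducts, the intersection L_m ∩ E equals Add(T) for every m ≥ 0, where L_m is the class of objects with an Add(T)-coresolution of length m and E = {E : Ext^i_A(T,E)=0 for all i>0}. -/
open CategoryTheory Limits

universe w v u

/-- `X` is a direct summand of a coproduct of copies of `T`. -/
def InAdd {A : Type u} [Category.{v} A] [Abelian A] [HasCoproducts.{v} A]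
    (T X : A) : Prop :=
  ∃ (ι : Type v) (Y : A), Nonempty ((X ⊞ Y) ≅ ∐ (fun _ : ι => T))

/-- `L ∈ L_m`: there is an exact sequence `0 → L → T^0 → ⋯ → T^m → 0` with all
`T^j ∈ Add(T)` (encoded by an `ℕ`-indexed sequence vanishing in degrees `> m`). -/
def InLm {A : Type u} [Category.{v} A] [Abelian A] [HasCoproducts.{v} A]
    (T : A) (m : ℕ) (L : A) : Prop :=
  ∃ (E : ℕ → A) (f : L ⟶ E 0) (d : ∀ i : ℕ, E i ⟶ E (i + 1))
    (hw0 : f ≫ d 0 = 0) (hw : ∀ i : ℕ, d i ≫ d (i + 1) = 0),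
    (∀ i : ℕ, i ≤ m → InAdd T (E i)) ∧
    (∀ i : ℕ, m < i → IsZero (E i)) ∧
    Mono f ∧
    (ShortComplex.mk f (d 0) hw0).Exact ∧
    (∀ i : ℕ, (ShortComplex.mk (d i) (d (i + 1)) (hw i)).Exact)

namespace Statement5Aux

open CategoryTheory.Abelian DerivedCategory ZeroObject

section ToHom

variable {C : Type u} [Category.{v} C] [Abelian C]

section
variable (C) [HasDerivedCategory.{w} C]

/-- The single functor into the derived category agrees with the composition with `Q`. -/
noncomputable def sIso :
    DerivedCategory.singleFunctor C 0 ≅ CochainComplex.singleFunctor C 0 ⋙ DerivedCategory.Q where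
  hom := (singleFunctorsPostcompQIso C).hom.hom 0
  inv := (singleFunctorsPostcompQIso C).inv.hom 0
  hom_inv_id := by
    rw [singleFunctorsPostcompQIso_hom_hom, singleFunctorsPostcompQIso_inv_hom,
      ]
    exact (Category.id_comp _).trans rfl
  inv_hom_id := by
    rw [singleFunctorsPostcompQIso_hom_hom, singleFunctorsPostcompQIso_inv_hom]
    exact (Category.id_comp _).trans rfl

/-- The homology of a single complex is the original object. -/
noncomputable def SH :
    DerivedCategory.singleFunctor C 0 ⋙ DerivedCategory.homologyFunctor C 0 ≅ 𝟭 C :=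
  Functor.isoWhiskerRight (sIso C) _ ≪≫ Functor.associator _ _ _ ≪≫
    Functor.isoWhiskerLeft _ (homologyFunctorFactors C 0) ≪≫
    HomologicalComplex.homologyFunctorSingleIso C (ComplexShape.up ℤ) 0

end

variable [HasExt.{w} C]

/-- A morphism attached to a degree-zero Ext class. -/
noncomputable def extToHom {X Y : C} (e : Ext X Y 0) : X ⟶ Y :=
  letI := HasDerivedCategory.standard C
  (SH C).inv.app X ≫
    (DerivedCategory.homologyFunctor C 0).map
      ((ShiftedHom.homEquiv (C := DerivedCategory C) (((0 : ℕ) : ℤ)) (by simp)).symm e.hom) ≫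
    (SH C).hom.app Y

lemma extToHom_mk₀ {X Y : C} (f : X ⟶ Y) : extToHom (Ext.mk₀ f) = f := by
  letI := HasDerivedCategory.standard C
  dsimp only [extToHom]
  rw [Ext.mk₀_hom]
  have h1 : (ShiftedHom.homEquiv (C := DerivedCategory C) (((0 : ℕ) : ℤ)) (by simp)).symm
      (ShiftedHom.mk₀ (((0 : ℕ) : ℤ)) (by simp) ((DerivedCategory.singleFunctor C 0).map f)) =
      (DerivedCategory.singleFunctor C 0).map f := by
    rw [Equiv.symm_apply_eq]
    rfl
  rw [h1]
  have h2 := (SH C).hom.naturality f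
  dsimp at h2
  rw [h2, Iso.inv_hom_id_app_assoc]

lemma extToHom_comp_mk₀ {X Y Z : C} (x : Ext X Y 0) (p : Y ⟶ Z) :
    extToHom (x.comp (Ext.mk₀ p) (add_zero 0)) = extToHom x ≫ p := by
  letI := HasDerivedCategory.standard C
  dsimp only [extToHom]
  rw [Ext.comp_hom, Ext.mk₀_hom, ShiftedHom.comp_mk₀]
  have h1 : (ShiftedHom.homEquiv (C := DerivedCategory C) (((0 : ℕ) : ℤ)) (by simp)).symm
      (x.hom ≫ ((DerivedCategory.singleFunctor C 0).map p)⟦((0 : ℕ) : ℤ)⟧') =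
      (ShiftedHom.homEquiv (C := DerivedCategory C) (((0 : ℕ) : ℤ)) (by simp)).symm x.hom ≫
        (DerivedCategory.singleFunctor C 0).map p := by
    dsimp [ShiftedHom.homEquiv]
    rw [Category.assoc]
    erw [(shiftFunctorZero' (DerivedCategory C) (((0 : ℕ) : ℤ)) (by simp)).hom.naturality]
    simp
  rw [h1, Functor.map_comp, Category.assoc, Category.assoc]
  have h2 := (SH C).hom.naturality p
  dsimp at h2
  rw [h2]
  simp only [Category.assoc]

lemma surjective_of_ext_vanishing {S : ShortComplex C} (hS : S.ShortExact) (T : C)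
    (hvanish : Subsingleton (Ext T S.X₁ 1)) (g : T ⟶ S.X₃) :
    ∃ l : T ⟶ S.X₂, l ≫ S.g = g := by
  have h0 : (Ext.mk₀ g).comp hS.extClass (zero_add 1) = 0 := Subsingleton.elim _ _
  obtain ⟨x₂, hx₂⟩ := Ext.covariant_sequence_exact₃ T hS (Ext.mk₀ g) (zero_add 1) h0
  refine ⟨extToHom x₂, ?_⟩
  rw [← extToHom_mk₀ (C := C) g, ← hx₂, extToHom_comp_mk₀]

end ToHom

section Main

variable {A : Type u} [Category.{v} A] [Abelian A] [HasCoproducts.{v} A]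

lemma inAdd_of_iso {T X Y : A} (h : InAdd T X) (e : Y ≅ X) : InAdd T Y := by
  obtain ⟨ι, W, ⟨i⟩⟩ := h
  exact ⟨ι, W, ⟨biprod.mapIso e (Iso.refl W) ≪≫ i⟩⟩

lemma inAdd_zero {T X : A} (hX : IsZero X) : InAdd T X := by
  refine ⟨PUnit.{v+1}, T, ⟨?_ ≪≫ (coproductUniqueIso (fun _ : PUnit.{v+1} => T)).symm⟩⟩
  refine ⟨biprod.snd, biprod.inr, ?_, by simp⟩
  apply biprod.hom_ext
  · exact hX.eq_of_tgt _ _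
  · simp

variable [HasExt.{w} A]

lemma ext_subsingleton_of_inAdd {T X : A}
    (hii : ∀ (I : Type v) (i : ℕ), 0 < i →
      Subsingleton (Abelian.Ext T (∐ (fun _ : I => T)) i))
    (hX : InAdd T X) (i : ℕ) (hi : 0 < i) : Subsingleton (Abelian.Ext T X i) := by
  obtain ⟨ι, Y, ⟨e⟩⟩ := hX
  refine subsingleton_of_forall_eq 0 (fun c => ?_)
  have h1 : c.comp (Abelian.Ext.mk₀ (biprod.inl ≫ e.hom)) (add_zero i) = 0 := by
    have := hii ι i hi
    exact Subsingleton.elim _ _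
  have h2 : c = c.comp (Abelian.Ext.mk₀ ((biprod.inl ≫ e.hom) ≫ (e.inv ≫ biprod.fst)))
      (add_zero i) := by
    rw [show (biprod.inl ≫ e.hom) ≫ (e.inv ≫ biprod.fst) = 𝟙 X by
        rw [Category.assoc, Iso.hom_inv_id_assoc, biprod.inl_fst],
      Abelian.Ext.comp_mk₀_id]
  rw [h2, ← Abelian.Ext.mk₀_comp_mk₀, ← Abelian.Ext.comp_assoc_of_second_deg_zero, h1,
    Abelian.Ext.zero_comp]

lemma forward {T : A}
    (hii : ∀ (I : Type v) (i : ℕ), 0 < i →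
      Subsingleton (Abelian.Ext T (∐ (fun _ : I => T)) i)) :
    ∀ (m : ℕ) (X : A), InLm T m X →
      (∀ i : ℕ, 0 < i → Subsingleton (Abelian.Ext T X i)) → InAdd T X := by
  intro m
  induction m with
  | zero =>
    intro X hL _
    obtain ⟨E, f, d, hw0, hw, h1, h2, hf, hex0, hex⟩ := hL
    have hz1 : IsZero (E 1) := h2 1 Nat.one_pos
    have hd0 : d 0 = 0 := hz1.eq_of_tgt _ _
    have hepi : Epi f := (ShortComplex.exact_iff_epi _ hd0).1 hex0
    have : IsIso f := isIso_of_mono_of_epi f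
    exact inAdd_of_iso (h1 0 le_rfl) (asIso f)
  | succ m ih =>
    intro X hL hE
    obtain ⟨E, f, d, hw0, hw, h1, h2, hf, hex0, hex⟩ := hL
    let S : ShortComplex A := ShortComplex.mk f (cokernel.π f) (cokernel.condition f)
    have hS : S.ShortExact := by
      refine ShortComplex.ShortExact.mk' ?_ hf ?_
      · exact S.exact_of_g_is_cokernel (cokernelIsCokernel f)
      · exact coequalizer.π_epi
    -- the induced mono `K ⟶ E 1`
    let f' : cokernel f ⟶ E 1 := cokernel.desc f (d 0) hw0
    have hπf' : cokernel.π f ≫ f' = d 0 := cokernel.π_desc _ _ _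
    have hmonof' : Mono f' :=
      (ShortComplex.exact_iff_mono_cokernel_desc (ShortComplex.mk f (d 0) hw0)).1 hex0
    have hw0' : f' ≫ d 1 = 0 := by
      rw [← cancel_epi (cokernel.π f), reassoc_of% hπf', hw 0, comp_zero]
    -- K ∈ L_m
    have hK : InLm T m (cokernel f) := by
      refine ⟨fun i => E (i + 1), f', fun i => d (i + 1), hw0', fun i => hw (i + 1),
        fun i hi => h1 (i + 1) (by omega), fun i hi => h2 (i + 1) (by omega), hmonof',
        ?_, fun i => hex (i + 1)⟩
      exact (ShortComplex.exact_iff_of_epi_of_isIso_of_mono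
        (S₁ := ShortComplex.mk (d 0) (d 1) (hw 0)) (S₂ := ShortComplex.mk f' (d 1) hw0')
        ⟨cokernel.π f, 𝟙 _, 𝟙 _, by simp [hπf'], by simp⟩).1 (hex 0)
    -- K ∈ E
    have hEB : ∀ i : ℕ, 0 < i → Subsingleton (Abelian.Ext T (E 0) i) :=
      fun i hi => ext_subsingleton_of_inAdd hii (h1 0 (by omega)) i hi
    have hEK : ∀ i : ℕ, 0 < i → Subsingleton (Abelian.Ext T (cokernel f) i) := by
      intro i hi
      refine subsingleton_of_forall_eq 0 (fun x₃ => ?_)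
      have h0 : x₃.comp hS.extClass rfl = 0 := by
        have := hE (i + 1) (by omega)
        exact Subsingleton.elim _ _
      obtain ⟨x₂, hx₂⟩ := Abelian.Ext.covariant_sequence_exact₃ T hS x₃ rfl h0
      have hx₂0 : x₂ = 0 := by
        have := hEB i hi
        exact Subsingleton.elim _ _
      rw [← hx₂, hx₂0, Abelian.Ext.zero_comp]
    -- by induction, K ∈ Add T
    obtain ⟨I, YK, ⟨eK⟩⟩ := ih (cokernel f) hK hEK
    -- construct a section of π
    have hsurj : ∀ g : T ⟶ cokernel f, ∃ l : T ⟶ E 0, l ≫ cokernel.π f = g := fun g =>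
      surjective_of_ext_vanishing hS T (hE 1 Nat.one_pos) g
    choose l hl using hsurj
    let q : (∐ fun _ : I => T) ⟶ cokernel f := eK.inv ≫ biprod.fst
    let l' : (∐ fun _ : I => T) ⟶ E 0 :=
      Sigma.desc (fun i => l (Sigma.ι (fun _ : I => T) i ≫ q))
    have hl' : l' ≫ cokernel.π f = q := by
      apply colimit.hom_ext
      intro j
      simp [l', hl]
    let s : cokernel f ⟶ E 0 := biprod.inl ≫ eK.hom ≫ l'
    have hs : s ≫ cokernel.π f = 𝟙 (cokernel f) := by
      simp only [s, Category.assoc, hl', q, Iso.hom_inv_id_assoc, biprod.inl_fst]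
    let sp : S.Splitting := ShortComplex.Splitting.ofExactOfSection S hS.exact s hs hf
    let eiso : E 0 ≅ X ⊞ cokernel f := sp.isoBinaryBiproduct
    obtain ⟨J, Z, ⟨eJ⟩⟩ := h1 0 (by omega)
    exact ⟨J, cokernel f ⊞ Z, ⟨(biprod.associator X (cokernel f) Z).symm ≪≫
      biprod.mapIso eiso.symm (Iso.refl Z) ≪≫ eJ⟩⟩

lemma backward {T : A} (m : ℕ) {X : A} (hX : InAdd T X) : InLm T m X := by
  refine ⟨fun i => Nat.casesOn i X (fun _ => 0), 𝟙 X, fun i => 0, by simp, by simp,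
    ?_, ?_, inferInstance, ?_, ?_⟩
  · intro i _
    cases i with
    | zero => exact hX
    | succ j => exact inAdd_zero (isZero_zero A)
  · intro i hi
    cases i with
    | zero => omega
    | succ j => exact isZero_zero A
  · exact (ShortComplex.exact_iff_epi _ rfl).2 inferInstance
  · intro i
    exact ShortComplex.exact_of_isZero_X₂ _ (isZero_zero A)

end Main

end Statement5Aux

/-- under conditions (i) and (ii) on `T` in an abelian category with
exact coproducts, for every `m ≥ 0` the intersection `L_m ∩ E` equals `Add(T)`,
where `E = {E : Ext^i(T,E) = 0 for all i > 0}`. -/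
theorem statement5 (A : Type u) [Category.{v} A] [Abelian A]
    [HasCoproducts.{v} A] [AB4 A] [HasExt.{w} A]
    (T : A) (n : ℕ)
    (hi : ∀ (i : ℕ), n < i → ∀ X : A, Subsingleton (Abelian.Ext T X i))
    (hii : ∀ (I : Type v) (i : ℕ), 0 < i →
      Subsingleton (Abelian.Ext T (∐ (fun _ : I => T)) i))
    (m : ℕ) (X : A) :
    (InLm T m X ∧ (∀ i : ℕ, 0 < i → Subsingleton (Abelian.Ext T X i))) ↔
      InAdd T X := by
  constructor
  · rintro ⟨hL, hE⟩
    exact Statement5Aux.forward hii m X hL hE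
  · intro hX
    exact ⟨Statement5Aux.backward m hX,
      fun i hi => Statement5Aux.ext_subsingleton_of_inAdd hii hX i hi⟩
end

section
/- Under the assumptions of (i) and (ii) on T in an abelian category A with exact coproducts, the classes L_m stabilize: for each integer m ≥ n one has L_m = L_{m+1}, where L_m is the class of objects with an Add(T)-coresolution of length m. -/
open CategoryTheory Limits
open ZeroObject

universe w v u

namespace Stmt6Aux

open Abelian

variable {A : Type u} [Category.{v} A] [Abelian A]

/-- exactness of `W → X → ker c` induced by exactness of `W → X → Y`. -/
lemma exact_mk_lift {W X Y Z : A} (a : W ⟶ X) (b : X ⟶ Y) (c : Y ⟶ Z)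
    (hab : a ≫ b = 0) (hbc : b ≫ c = 0)
    (h : (ShortComplex.mk a b hab).Exact)
    (w : a ≫ kernel.lift c b hbc = 0) :
    (ShortComplex.mk a (kernel.lift c b hbc) w).Exact := by
  rw [ShortComplex.exact_iff_exact_up_to_refinements]
  intro W' x₂ hx₂
  have hx₂' : x₂ ≫ b = 0 := by
    have := hx₂ =≫ kernel.ι c
    simpa using this
  obtain ⟨W'', π, hπ, x₁, fac⟩ := h.exact_up_to_refinements x₂ hx₂'
  exact ⟨W'', π, hπ, x₁, fac⟩

lemma epi_kernel_lift {X Y Z : A} (b : X ⟶ Y) (c : Y ⟶ Z) (hbc : b ≫ c = 0)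
    (h : (ShortComplex.mk b c hbc).Exact) : Epi (kernel.lift c b hbc) := by
  rw [epi_iff_surjective_up_to_refinements]
  intro W y
  have : (y ≫ kernel.ι c) ≫ c = 0 := by simp
  obtain ⟨W', π, hπ, x₁, fac⟩ := h.exact_up_to_refinements (y ≫ kernel.ι c) this
  refine ⟨W', π, hπ, x₁, ?_⟩
  rw [← cancel_mono (kernel.ι c)]
  simpa using fac

lemma exact_mk_zero_of_epi {X Y Z : A} (p : X ⟶ Y) (hp : Epi p) (w : p ≫ (0 : Y ⟶ Z) = 0) :
    (ShortComplex.mk p (0 : Y ⟶ Z) w).Exact := by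
  rw [ShortComplex.exact_iff_exact_up_to_refinements]
  intro W' x₂ _
  obtain ⟨W'', π, hπ, x, fac⟩ := surjective_up_to_refinements_of_epi p x₂
  exact ⟨W'', π, hπ, x, fac⟩

/-- exactness of `ker b → X → ker c`. -/
lemma exact_ι_lift {X Y Z : A} (b : X ⟶ Y) (c : Y ⟶ Z) (hbc : b ≫ c = 0)
    (w : kernel.ι b ≫ kernel.lift c b hbc = 0) :
    (ShortComplex.mk (kernel.ι b) (kernel.lift c b hbc) w).Exact := by
  rw [ShortComplex.exact_iff_exact_up_to_refinements]
  intro W' x₂ hx₂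
  have hx₂' : x₂ ≫ b = 0 := by
    have := hx₂ =≫ kernel.ι c
    simpa using this
  exact ⟨W', 𝟙 W', inferInstance, kernel.lift b x₂ hx₂', by simp⟩

section HasExt

variable [HasExt.{w} A]

lemma subsingleton_ext_of_retract {T Z Z' : A} {k : ℕ} (i : Z ⟶ Z') (r : Z' ⟶ Z)
    (hir : i ≫ r = 𝟙 Z) (h : Subsingleton (Ext T Z' k)) : Subsingleton (Ext T Z k) := by
  constructor
  intro a b
  have key : ∀ e : Ext T Z k,
      (e.comp (Ext.mk₀ i) (add_zero k)).comp (Ext.mk₀ r) (add_zero k) = e := by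
    intro e
    rw [Ext.comp_assoc_of_third_deg_zero, Ext.mk₀_comp_mk₀, hir, Ext.comp_mk₀_id]
  rw [← key a, ← key b, Subsingleton.elim (a.comp (Ext.mk₀ i) (add_zero k))
    (b.comp (Ext.mk₀ i) (add_zero k))]

lemma section_of_extClass_zero {S : ShortComplex A} (hS : S.ShortExact)
    (h : hS.extClass = 0) : ∃ s : S.X₃ ⟶ S.X₂, s ≫ S.g = 𝟙 S.X₃ := by
  letI := HasDerivedCategory.standard A
  have hδ : hS.singleδ = 0 := by
    rw [← hS.extClass_hom, h, Ext.zero_hom]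
  obtain ⟨s', hs'⟩ : ∃ s' : (DerivedCategory.singleFunctor A 0).obj S.X₃ ⟶
      (DerivedCategory.singleFunctor A 0).obj S.X₂,
      𝟙 _ = s' ≫ (DerivedCategory.singleFunctor A 0).map S.g :=
    Pretriangulated.Triangle.coyoneda_exact₃ _
    hS.singleTriangle_distinguished (𝟙 _) (by rw [Category.id_comp]; exact hδ)
  let e : DerivedCategory.singleFunctor A 0 ⋙ DerivedCategory.homologyFunctor A 0 ≅ 𝟭 A :=
    Functor.isoWhiskerRight ((SingleFunctors.evaluation _ _ 0).mapIso
      (DerivedCategory.singleFunctorsPostcompQIso A)) _ ≪≫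
    Functor.associator _ _ _ ≪≫
    Functor.isoWhiskerLeft _ (DerivedCategory.homologyFunctorFactors A 0) ≪≫
    HomologicalComplex.homologyFunctorSingleIso A (ComplexShape.up ℤ) 0
  refine ⟨e.inv.app S.X₃ ≫ (DerivedCategory.homologyFunctor A 0).map s' ≫ e.hom.app S.X₂, ?_⟩
  have nat := e.hom.naturality S.g
  dsimp at nat
  rw [Category.assoc, Category.assoc, ← nat,
    ← Functor.map_comp_assoc]
  have hs'' : s' ≫ (DerivedCategory.singleFunctor A 0).map S.g = 𝟙 _ := by
    simpa using hs'.symm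
  rw [hs'']
  simpa using e.inv_hom_id_app S.X₃

lemma lift_of_ext_one {S : ShortComplex A} (hS : S.ShortExact) {W : A} (g : W ⟶ S.X₃)
    (hsub : Subsingleton (Ext W S.X₁ 1)) : ∃ g' : W ⟶ S.X₂, g' ≫ S.g = g := by
  haveI := hS.mono_f
  haveI := hS.epi_g
  let k' : S.X₁ ⟶ pullback g S.g := pullback.lift 0 S.f (by simp [S.zero])
  have hk'fst : k' ≫ pullback.fst g S.g = 0 := pullback.lift_fst _ _ _
  have hk'snd : k' ≫ pullback.snd g S.g = S.f := pullback.lift_snd _ _ _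
  let S' : ShortComplex A := ShortComplex.mk k' (pullback.fst g S.g) hk'fst
  have hS' : S'.ShortExact := by
    have hmono : Mono k' := by
      have : Mono (k' ≫ pullback.snd g S.g) := by rw [hk'snd]; infer_instance
      exact mono_of_mono k' (pullback.snd g S.g)
    have hepi : Epi (pullback.fst g S.g) := inferInstance
    refine ⟨?_⟩
    rw [ShortComplex.exact_iff_exact_up_to_refinements]
    intro W' x₂ hx₂
    have hx₂' : (x₂ ≫ pullback.snd g S.g) ≫ S.g = 0 := by
      rw [Category.assoc, ← pullback.condition, ← Category.assoc, hx₂, zero_comp]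
    obtain ⟨W'', π, hπ, x₁, fac⟩ := hS.exact.exact_up_to_refinements
      (x₂ ≫ pullback.snd g S.g) hx₂'
    refine ⟨W'', π, hπ, x₁, ?_⟩
    apply pullback.hom_ext
    · have hx₂f : x₂ ≫ pullback.fst g S.g = 0 := hx₂
      change (π ≫ x₂) ≫ pullback.fst g S.g = (x₁ ≫ k') ≫ pullback.fst g S.g
      rw [Category.assoc, Category.assoc, hx₂f, hk'fst, comp_zero, comp_zero]
    · change _ = (x₁ ≫ k') ≫ pullback.snd g S.g
      rw [Category.assoc, Category.assoc, hk'snd]; exact fac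
  have hz : hS'.extClass = 0 := Subsingleton.elim _ _
  obtain ⟨σ, hσ⟩ := section_of_extClass_zero hS' hz
  refine ⟨σ ≫ pullback.snd g S.g, ?_⟩
  rw [Category.assoc, ← pullback.condition, ← Category.assoc]
  change (σ ≫ S'.g) ≫ g = g
  rw [hσ, Category.id_comp]

end HasExt

section Coprod

variable [HasCoproducts.{v} A]

lemma inAdd_of_isZero (T : A) {Z : A} (hZ : IsZero Z) : InAdd T Z := by
  refine ⟨PEmpty.{v+1}, ∐ (fun _ : PEmpty.{v+1} => T), ⟨?_⟩⟩
  refine ⟨biprod.snd, biprod.inr, ?_, by simp⟩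
  apply biprod.hom_ext'
  · apply hZ.eq_of_src
  · simp

lemma inAdd_of_biprod_iso {T Z W W' : A} (h : InAdd T Z) (e : W ⊞ W' ≅ Z) : InAdd T W := by
  obtain ⟨ι, Y, ⟨e'⟩⟩ := h
  exact ⟨ι, W' ⊞ Y, ⟨(biprod.associator W W' Y).symm ≪≫
    biprod.mapIso e (Iso.refl Y) ≪≫ e'⟩⟩

variable [HasExt.{w} A]

lemma subsingleton_ext_of_inAdd {T Z : A} (h : InAdd T Z) (k : ℕ)
    (hsub : ∀ (I : Type v), Subsingleton (Ext T (∐ (fun _ : I => T)) k)) :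
    Subsingleton (Ext T Z k) := by
  obtain ⟨ι, Y, ⟨e⟩⟩ := h
  exact subsingleton_ext_of_retract (biprod.inl ≫ e.hom) (e.inv ≫ biprod.fst)
    (by simp) (hsub ι)

/-- The key construction: truncating an `Add T`-coresolution at a kernel that is
itself in `Add T`. -/
lemma inLm_construct {T X : A} (m : ℕ) (E : ℕ → A) (f : X ⟶ E 0)
    (d : ∀ i : ℕ, E i ⟶ E (i + 1)) (hw0 : f ≫ d 0 = 0)
    (hw : ∀ i : ℕ, d i ≫ d (i + 1) = 0)
    (hAdd : ∀ i : ℕ, i ≤ m → InAdd T (E i))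
    (hmono : Mono f)
    (hex0 : (ShortComplex.mk f (d 0) hw0).Exact)
    (hex : ∀ i : ℕ, (ShortComplex.mk (d i) (d (i + 1)) (hw i)).Exact)
    (hK : InAdd T (kernel (d m))) : InLm T m X := by
  classical
  -- the lift maps
  let ℓ : ∀ j : ℕ, E j ⟶ kernel (d (j + 1)) := fun j => kernel.lift (d (j + 1)) (d j) (hw j)
  have hℓι : ∀ j, ℓ j ≫ kernel.ι (d (j + 1)) = d j := fun j => kernel.lift_ι _ _ _
  have hℓepi : ∀ j, Epi (ℓ j) := fun j => epi_kernel_lift _ _ _ (hex j)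
  let q : X ⟶ kernel (d 0) := kernel.lift (d 0) f hw0
  have hqι : q ≫ kernel.ι (d 0) = f := kernel.lift_ι _ _ _
  have hqepi : Epi q := epi_kernel_lift _ _ _ hex0
  have hqmono : Mono q := by
    have : Mono (q ≫ kernel.ι (d 0)) := by rw [hqι]; exact hmono
    exact mono_of_mono q (kernel.ι (d 0))
  -- the new complex
  let E' : ℕ → A := fun i => if i < m then E i else if i = m then kernel (d m) else 0
  have p1 : ∀ i, i < m → E' i = E i := fun i h => by simp [E', if_pos h]
  have p2 : E' m = kernel (d m) := by simp [E']
  have p2' : ∀ i, i + 1 = m → E' (i + 1) = kernel (d (i + 1)) := fun i h => by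
    rw [h]; exact p2
  have p3 : ∀ i, m < i → E' i = 0 := fun i h => by
    simp only [E']
    rw [if_neg (by omega : ¬ i < m), if_neg (by omega : ¬ i = m)]
  have p0 : ¬ 0 < m → E' 0 = kernel (d 0) := fun h => by
    have hm : m = 0 := by omega
    rw [hm] at p2
    exact p2
  let d' : ∀ i : ℕ, E' i ⟶ E' (i + 1) := fun i =>
    if h1 : i + 1 < m then
      eqToHom (p1 i (by omega)) ≫ d i ≫ eqToHom (p1 (i + 1) h1).symm
    else if h2 : i + 1 = m then
      eqToHom (p1 i (by omega)) ≫ ℓ i ≫ eqToHom (p2' i h2).symm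
    else 0
  let f' : X ⟶ E' 0 :=
    if h0 : 0 < m then f ≫ eqToHom (p1 0 h0).symm
    else q ≫ eqToHom (p0 h0).symm
  have hd'1 : ∀ i (h1 : i + 1 < m),
      d' i = eqToHom (p1 i (by omega)) ≫ d i ≫ eqToHom (p1 (i + 1) h1).symm := by
    intro i h1
    simp only [d']
    rw [dif_pos h1]
  have hd'2 : ∀ i (h2 : i + 1 = m),
      d' i = eqToHom (p1 i (by omega)) ≫ ℓ i ≫ eqToHom (p2' i h2).symm := by
    intro i h2
    simp only [d']
    rw [dif_neg (by omega), dif_pos h2]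
  have hd'3 : ∀ i, ¬ i + 1 < m → ¬ i + 1 = m → d' i = 0 := by
    intro i ha hb
    simp only [d']
    rw [dif_neg ha, dif_neg hb]
  have hf'1 : ∀ (h0 : 0 < m), f' = f ≫ eqToHom (p1 0 h0).symm := by
    intro h0; simp only [f']; rw [dif_pos h0]
  have hf'2 : ∀ (h0 : ¬ 0 < m), f' = q ≫ eqToHom (p0 h0).symm := by
    intro h0; simp only [f']; rw [dif_neg h0]
  -- differentials compose to zero
  have hw0' : f' ≫ d' 0 = 0 := by
    by_cases h0 : 0 < m
    · rw [hf'1 h0]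
      by_cases h1 : 0 + 1 < m
      · rw [hd'1 0 h1]
        simp [reassoc_of% hw0]
      · by_cases h2 : 0 + 1 = m
        · rw [hd'2 0 h2]
          have hfl : f ≫ ℓ 0 = 0 := by
            rw [← cancel_mono (kernel.ι (d (0 + 1)))]
            simp [ℓ, hw0]
          simp [reassoc_of% hfl]
        · rw [hd'3 0 h1 h2, comp_zero]
    · rw [hd'3 0 (by omega) (by omega), comp_zero]
  have hw' : ∀ i : ℕ, d' i ≫ d' (i + 1) = 0 := by
    intro i
    by_cases hA : i + 1 + 1 < m
    · rw [hd'1 i (by omega), hd'1 (i + 1) hA]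
      simp [reassoc_of% (hw i)]
    · by_cases hB : i + 1 + 1 = m
      · rw [hd'1 i (by omega), hd'2 (i + 1) hB]
        have hz2 : d i ≫ ℓ (i + 1) = 0 := by
          rw [← cancel_mono (kernel.ι (d (i + 1 + 1)))]
          simp [ℓ, hw i]
        simp [reassoc_of% hz2]
      · rw [hd'3 (i + 1) hA hB, comp_zero]
  refine ⟨E', f', d', hw0', hw', ?_, ?_, ?_, ?_, ?_⟩
  · -- InAdd
    intro i hi
    rcases lt_or_eq_of_le hi with h' | h'
    · rw [p1 i h']
      exact hAdd i (by omega)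
    · subst h'
      rw [p2]
      exact hK
  · -- zero beyond m
    intro i hi
    rw [p3 i hi]
    exact isZero_zero A
  · -- Mono f'
    by_cases h0 : 0 < m
    · rw [hf'1 h0]
      haveI := hmono
      apply mono_comp
    · rw [hf'2 h0]
      haveI := hqmono
      apply mono_comp
  · -- exactness at E' 0
    by_cases h0 : 0 < m
    · by_cases h1 : 0 + 1 < m
      · refine ShortComplex.exact_of_iso
          (ShortComplex.isoMk (Iso.refl X) (eqToIso (p1 0 h0).symm)
            (eqToIso (p1 (0 + 1) h1).symm) ?_ ?_) hex0
        · dsimp only; rw [hf'1 h0]; simp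
        · dsimp only; rw [hd'1 0 h1]; simp
      · have h2 : 0 + 1 = m := by omega
        have hfl : f ≫ ℓ 0 = 0 := by
          rw [← cancel_mono (kernel.ι (d (0 + 1)))]
          simp [ℓ, hw0]
        refine ShortComplex.exact_of_iso
          (ShortComplex.isoMk (Iso.refl X) (eqToIso (p1 0 h0).symm)
            (eqToIso (p2' 0 h2).symm) ?_ ?_)
          (exact_mk_lift f (d 0) (d (0 + 1)) hw0 (hw 0) hex0 hfl)
        · dsimp only; rw [hf'1 h0]; simp
        · dsimp only; rw [hd'2 0 h2]; simp [ℓ]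
    · refine ShortComplex.exact_of_iso
        (ShortComplex.isoMk (Iso.refl X) (eqToIso (p0 h0).symm)
          (eqToIso (p3 (0 + 1) (by omega)).symm) ?_ ?_)
        (exact_mk_zero_of_epi q hqepi comp_zero)
      · dsimp only; rw [hf'2 h0]; simp
      · dsimp only; rw [hd'3 0 (by omega) (by omega)]; simp
  · -- exactness at later spots
    intro i
    by_cases hA : i + 1 < m
    · by_cases hB : i + 1 + 1 < m
      · refine ShortComplex.exact_of_iso
          (ShortComplex.isoMk (eqToIso (p1 i (by omega)).symm) (eqToIso (p1 (i + 1) hA).symm)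
            (eqToIso (p1 (i + 1 + 1) hB).symm) ?_ ?_) (hex i)
        · dsimp only; rw [hd'1 i hA]; simp
        · dsimp only; rw [hd'1 (i + 1) hB]; simp
      · have hC : i + 1 + 1 = m := by omega
        have hz2 : d i ≫ ℓ (i + 1) = 0 := by
          rw [← cancel_mono (kernel.ι (d (i + 1 + 1)))]
          simp [ℓ, hw i]
        refine ShortComplex.exact_of_iso
          (ShortComplex.isoMk (eqToIso (p1 i (by omega)).symm) (eqToIso (p1 (i + 1) hA).symm)
            (eqToIso (p2' (i + 1) hC).symm) ?_ ?_)
          (exact_mk_lift (d i) (d (i + 1)) (d (i + 1 + 1)) (hw i) (hw (i + 1)) (hex i) hz2)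
        · dsimp only; rw [hd'1 i hA]; simp
        · dsimp only; rw [hd'2 (i + 1) hC]; simp [ℓ]
    · by_cases hB : i + 1 = m
      · refine ShortComplex.exact_of_iso
          (ShortComplex.isoMk (eqToIso (p1 i (by omega)).symm) (eqToIso (p2' i hB).symm)
            (eqToIso (p3 (i + 1 + 1) (by omega)).symm) ?_ ?_)
          (exact_mk_zero_of_epi (ℓ i) (hℓepi i) comp_zero)
        · dsimp only; rw [hd'2 i hB]; simp
        · dsimp only; rw [hd'3 (i + 1) (by omega) (by omega)]; simp
      · exact ShortComplex.exact_of_isZero_X₂ _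
          (by dsimp only; rw [p3 (i + 1) (by omega)]; exact isZero_zero A)

end Coprod

end Stmt6Aux

open Stmt6Aux Abelian in
/-- under conditions (i) and (ii) on `T` in an abelian category with
exact coproducts, the classes `L_m` stabilize: for each `m ≥ n` one has
`L_m = L_{m+1}`. -/
theorem statement6 (A : Type u) [Category.{v} A] [Abelian A]
    [HasCoproducts.{v} A] [AB4 A] [HasExt.{w} A]
    (T : A) (n : ℕ)
    (hi : ∀ (i : ℕ), n < i → ∀ X : A, Subsingleton (Abelian.Ext T X i))
    (hii : ∀ (I : Type v) (i : ℕ), 0 < i →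
      Subsingleton (Abelian.Ext T (∐ (fun _ : I => T)) i))
    (m : ℕ) (hm : n ≤ m) (X : A) :
    InLm T m X ↔ InLm T (m + 1) X := by
  constructor
  · rintro ⟨E, f, d, hw0, hw, hAdd, hzero, hmono, hex0, hex⟩
    refine ⟨E, f, d, hw0, hw, ?_, ?_, hmono, hex0, hex⟩
    · intro i hi'
      rcases Nat.lt_or_ge i (m + 1) with h | h
      · exact hAdd i (by omega)
      · have hieq : i = m + 1 := by omega
        subst hieq
        exact inAdd_of_isZero T (hzero _ (by omega))
    · intro i hi'
      exact hzero i (by omega)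
  · rintro ⟨E, f, d, hw0, hw, hAdd, hzero, hmono, hex0, hex⟩
    classical
    -- `d (m+1) = 0` and `d m` is epi
    have hd1 : d (m + 1) = 0 := (hzero (m + 2) (by omega)).eq_of_tgt _ _
    have hepdm : Epi (d m) := by
      rw [epi_iff_surjective_up_to_refinements]
      intro W y
      obtain ⟨W', π, hπ, x, fac⟩ := (hex m).exact_up_to_refinements y
        (by simp [hd1])
      exact ⟨W', π, hπ, x, fac⟩
    -- the short exact sequences `0 → K_j → E j → K_{j+1} → 0`
    have hwj : ∀ j, kernel.ι (d j) ≫ kernel.lift (d (j + 1)) (d j) (hw j) = 0 := by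
      intro j
      rw [← cancel_mono (kernel.ι (d (j + 1)))]
      simp
    have hses : ∀ j, (ShortComplex.mk (kernel.ι (d j))
        (kernel.lift (d (j + 1)) (d j) (hw j)) (hwj j)).ShortExact := by
      intro j
      haveI : Epi (kernel.lift (d (j + 1)) (d j) (hw j)) := epi_kernel_lift _ _ _ (hex j)
      exact ⟨exact_ι_lift _ _ _ _⟩
    -- `X ≅ K_0`
    let q : X ⟶ kernel (d 0) := kernel.lift (d 0) f hw0
    have hqι : q ≫ kernel.ι (d 0) = f := kernel.lift_ι _ _ _
    have hqepi : Epi q := epi_kernel_lift _ _ _ hex0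
    have hqmono : Mono q := by
      have : Mono (q ≫ kernel.ι (d 0)) := by rw [hqι]; exact hmono
      exact mono_of_mono q (kernel.ι (d 0))
    haveI : IsIso q := isIso_of_mono_of_epi q
    -- dimension shifting
    have key : ∀ j : ℕ, j ≤ m → Subsingleton (Ext T (kernel (d j)) (m + 1 - j)) := by
      intro j
      induction j with
      | zero =>
        intro _
        have h1 : Subsingleton (Ext T X (m + 1)) := hi (m + 1) (by omega) X
        exact subsingleton_ext_of_retract (inv q) q (by simp) h1
      | succ j ih =>
        intro hj
        have hprev := ih (by omega)
        have hdeg : m + 1 - j = (m + 1 - (j + 1)) + 1 := by omega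
        rw [hdeg] at hprev
        have hEj : Subsingleton (Ext T (E j) (m + 1 - (j + 1))) :=
          subsingleton_ext_of_inAdd (hAdd j (by omega)) _
            (fun I => hii I _ (by omega))
        constructor
        intro a b
        have hzz : ∀ x : Ext T (kernel (d (j + 1))) (m + 1 - (j + 1)), x = 0 := by
          intro x
          obtain ⟨x₂, hx₂⟩ := Ext.covariant_sequence_exact₃ T (hses j) x rfl
            (@Subsingleton.elim _ hprev _ 0)
          rw [← hx₂, @Subsingleton.elim _ hEj x₂ 0, Ext.zero_comp]
        rw [hzz a, hzz b]
    have hsub1 : Subsingleton (Ext T (kernel (d m)) 1) := by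
      have := key m le_rfl
      rwa [show m + 1 - m = 1 by omega] at this
    -- split the last short exact sequence `0 → K_m → E m → E (m+1) → 0`
    have hSm : (ShortComplex.mk (kernel.ι (d m)) (d m) (kernel.condition (d m))).ShortExact := by
      haveI := hepdm
      refine ⟨?_⟩
      rw [ShortComplex.exact_iff_exact_up_to_refinements]
      intro W x₂ hx₂
      exact ⟨W, 𝟙 W, inferInstance, kernel.lift (d m) x₂ hx₂, by simp⟩
    obtain ⟨ι₁, Y₁, ⟨e₁⟩⟩ := hAdd (m + 1) le_rfl
    let r₀ : (∐ fun _ : ι₁ => T) ⟶ E (m + 1) := e₁.inv ≫ biprod.fst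
    let s₀ : E (m + 1) ⟶ ∐ fun _ : ι₁ => T := biprod.inl ≫ e₁.hom
    have hs₀r₀ : s₀ ≫ r₀ = 𝟙 (E (m + 1)) := by simp [s₀, r₀]
    have hlift : ∀ a : ι₁, ∃ g' : T ⟶ E m,
        g' ≫ d m = Sigma.ι (fun _ : ι₁ => T) a ≫ r₀ :=
      fun a => lift_of_ext_one hSm (Sigma.ι (fun _ : ι₁ => T) a ≫ r₀) hsub1
    choose lifts hlifts using hlift
    have hτ : Sigma.desc lifts ≫ d m = r₀ := by
      apply colimit.hom_ext
      rintro ⟨a⟩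
      simpa using hlifts a
    have hsec : (s₀ ≫ Sigma.desc lifts) ≫ d m = 𝟙 (E (m + 1)) := by
      rw [Category.assoc, hτ, hs₀r₀]
    let split := ShortComplex.Splitting.ofExactOfSection _ hSm.exact
      (s₀ ≫ Sigma.desc lifts) hsec hSm.mono_f
    have hK : InAdd T (kernel (d m)) :=
      inAdd_of_biprod_iso (hAdd m (by omega)) split.isoBinaryBiproduct.symm
    exact inLm_construct m E f d hw0 hw (fun i h => hAdd i (by omega)) hmono hex0 hex hK
end

section
/- In a cocomplete abelian category C, the class of weakly λ-generated objects is closed under quotient objects, extensions, and coproducts of fewer than λ objects, where λ is a regular cardinal. -/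
open CategoryTheory Limits

universe v u

variable {C : Type u} [Category.{v} C]

/-- An object `B` is weakly `κ`-generated if every morphism from `B` into a
coproduct factors through the subcoproduct over some subset of the index
of cardinality smaller than `κ`. -/
def WeaklyGen [HasColimits C] (κ : Cardinal.{v}) (B : C) : Prop :=
  ∀ (X : Type v) (D : X → C) (g : B ⟶ ∐ D),
    ∃ Z : Set X, Cardinal.mk Z < κ ∧
      ∃ h : B ⟶ ∐ (fun z : Z => D z.1),
        h ≫ Sigma.desc (fun z : Z => Sigma.ι D z.1) = g

section Aux

variable [Abelian C] [HasColimits C] {X : Type v} (D : X → C)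

/-- Inclusion of a subcoproduct. -/
noncomputable def subIncl (Z : Set X) : (∐ fun z : Z => D z.1) ⟶ ∐ D :=
  Sigma.desc fun z : Z => Sigma.ι D z.1

open scoped Classical in
/-- Retraction onto a subcoproduct, using zero morphisms. -/
noncomputable def subRetr (Z : Set X) : (∐ D) ⟶ ∐ fun z : Z => D z.1 :=
  Sigma.desc fun x => if h : x ∈ Z then Sigma.ι (fun z : Z => D z.1) ⟨x, h⟩ else 0

lemma subIncl_retr (Z : Set X) : subIncl D Z ≫ subRetr D Z = 𝟙 _ := by
  ext ⟨z, hz⟩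
  simp [subIncl, subRetr, dif_pos hz]

/-- Map between subcoproducts induced by an inclusion of index sets. -/
noncomputable def subMap {Z W : Set X} (hZW : Z ⊆ W) :
    (∐ fun z : Z => D z.1) ⟶ ∐ fun w : W => D w.1 :=
  Sigma.desc fun z : Z => Sigma.ι (fun w : W => D w.1) ⟨z.1, hZW z.2⟩

lemma subMap_incl {Z W : Set X} (hZW : Z ⊆ W) :
    subMap D hZW ≫ subIncl D W = subIncl D Z := by
  ext z
  simp [subMap, subIncl]

end Aux

/-- in a cocomplete abelian category `C`, the class of weakly
`λ`-generated objects is closed under quotient objects, extensions, and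
coproducts of fewer than `λ` objects, for `λ` a regular cardinal. -/
theorem statement15 [Abelian C] [HasColimits C]
    (κ : Cardinal.{v}) (hκ : κ.IsRegular) :
    -- closed under quotient objects
    (∀ (B B' : C) (p : B ⟶ B'), Epi p → WeaklyGen κ B → WeaklyGen κ B') ∧
    -- closed under extensions
    (∀ S : ShortComplex C, S.ShortExact →
      WeaklyGen κ S.X₁ → WeaklyGen κ S.X₃ → WeaklyGen κ S.X₂) ∧
    -- closed under coproducts of fewer than `κ` objects
    (∀ (ι : Type v), Cardinal.mk ι < κ → ∀ B : ι → C,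
      (∀ i, WeaklyGen κ (B i)) → WeaklyGen κ (∐ B)) := by
  refine ⟨?_, ?_, ?_⟩
  · -- quotients
    intro B B' p hp hB X D g
    obtain ⟨Z, hZ, h, hh⟩ := hB X D (p ≫ g)
    have hh' : h ≫ subIncl D Z = p ≫ g := hh
    refine ⟨Z, hZ, g ≫ subRetr D Z, ?_⟩
    have key : (p ≫ g) ≫ subRetr D Z ≫ subIncl D Z = p ≫ g := by
      rw [← hh', Category.assoc, reassoc_of% (subIncl_retr D Z)]
    have key2 : p ≫ (g ≫ subRetr D Z) ≫ subIncl D Z = p ≫ g := by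
      simpa only [Category.assoc] using key
    exact (cancel_epi p).mp key2
  · -- extensions
    intro S hS h1 h3 X D u
    obtain ⟨Z1, hZ1, a1, ha1⟩ := h1 X D (S.f ≫ u)
    have hfu : S.f ≫ u = a1 ≫ subIncl D Z1 := ha1.symm
    have hker : S.f ≫ (u - u ≫ subRetr D Z1 ≫ subIncl D Z1) = 0 := by
      rw [Preadditive.comp_sub, ← Category.assoc S.f u, hfu, Category.assoc,
        reassoc_of% (subIncl_retr D Z1), sub_self]
    have hex := hS.exact
    have : Epi S.g := hS.epi_g
    set v := hex.desc (u - u ≫ subRetr D Z1 ≫ subIncl D Z1) hker with hvdef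
    have hv : S.g ≫ v = u - u ≫ subRetr D Z1 ≫ subIncl D Z1 :=
      hex.g_desc _ hker
    obtain ⟨Z3, hZ3, a3, ha3⟩ := h3 X D v
    have ha3' : a3 ≫ subIncl D Z3 = v := ha3
    refine ⟨Z1 ∪ Z3, ?_, S.g ≫ a3 ≫ subMap D Set.subset_union_right
        + u ≫ subRetr D Z1 ≫ subMap D Set.subset_union_left, ?_⟩
    · refine lt_of_le_of_lt (Cardinal.mk_union_le _ _) ?_
      exact Cardinal.add_lt_of_lt hκ.aleph0_le hZ1 hZ3
    · show _ ≫ subIncl D (Z1 ∪ Z3) = u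
      rw [Preadditive.add_comp]
      simp only [Category.assoc]
      rw [subMap_incl, subMap_incl, ha3', hv]
      abel
  · -- coproducts
    intro ι hι B hB X D g
    choose Z hZ a ha using fun i => hB i X D (Sigma.ι B i ≫ g)
    refine ⟨⋃ i, Z i, ?_, Sigma.desc fun i => a i ≫ subMap D (Set.subset_iUnion Z i), ?_⟩
    · refine lt_of_le_of_lt (Cardinal.mk_iUnion_le_sum_mk) ?_
      exact Cardinal.sum_lt_of_isRegular hκ hι hZ
    · show _ ≫ subIncl D (⋃ i, Z i) = g
      ext i
      simp only [colimit.ι_desc_assoc, Cofan.mk_ι_app, Category.assoc, subMap_incl]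
      exact ha i
end
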